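/- Let G be a second countable Hausdorff topological group. If G admits no strictly coarser second countable Hausdorff group topology, then G is minimal, i.e., G admits no strictly coarser Hausdorff group topology at all. -/

import Mathlib

open Set Filter Topology Pointwise

section Aux
variable {G : Type*} [Group G] [TopologicalSpace G] [IsTopologicalGroup G] [T2Space G]

theorem stmt14_aux (Bσ : Set (Set G)) (hBc : Bσ.Countable)
    (hBb : ∀ O : Set G, IsOpen O → ∀ x ∈ O, ∃ B ∈ Bσ, x ∈ B ∧ B ⊆ O) :
    ∃ 𝒰 : Set (Set G), 𝒰.Countable ∧ 𝒰.Nonempty ∧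
      (∀ U ∈ 𝒰, IsOpen U ∧ (1 : G) ∈ U) ∧
      (∀ U ∈ 𝒰, ∀ V ∈ 𝒰, ∃ W ∈ 𝒰, W ⊆ U ∩ V) ∧
      (∀ U ∈ 𝒰, ∃ V ∈ 𝒰, V * V ⊆ U ∧ V ⊆ (fun x => x⁻¹) ⁻¹' U) ∧
      (∀ x₀ : G, ∀ U ∈ 𝒰, ∃ V ∈ 𝒰, V ⊆ (fun x => x₀ * x * x₀⁻¹) ⁻¹' U) ∧
      (∀ g : G, g ≠ 1 → ∃ U ∈ 𝒰, g ∉ U) := by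
  classical
  set P : Set G → Prop := fun U => IsOpen U ∧ (1 : G) ∈ U with hPdef
  have Puniv : P univ := ⟨isOpen_univ, mem_univ _⟩
  -- symmetric/multiplication witnesses
  have ex_sym : ∀ U : Set G, ∃ V, P V ∧
      (P U → V * V ⊆ U ∧ V ⊆ (fun x => x⁻¹) ⁻¹' U) := by
    intro U
    by_cases hU : P U
    · have hU1 : U ∈ 𝓝 (1 : G) := hU.1.mem_nhds hU.2
      obtain ⟨V, hVo, hV1, hVV⟩ := exists_open_nhds_one_mul_subset hU1
      have hVU : V ⊆ U := fun v hv => by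
        have := hVV (mul_mem_mul hv hV1); simpa using this
      refine ⟨V ∩ V⁻¹, ⟨hVo.inter hVo.inv, ⟨hV1, by simpa using hV1⟩⟩, fun _ => ⟨?_, ?_⟩⟩
      · exact fun x hx => hVV (mul_subset_mul inter_subset_left inter_subset_left hx)
      · intro x hx
        exact hVU hx.2
    · exact ⟨univ, Puniv, fun h => absurd h hU⟩
  choose symW symW_P symW_spec using ex_sym
  -- conjugation witnesses
  have ex_conj : ∀ B U : Set G, ∃ V, P V ∧
      ((∃ W, P W ∧ ∀ b ∈ B, ∀ w ∈ W, b * w * b⁻¹ ∈ U) →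
        ∀ b ∈ B, ∀ v ∈ V, b * v * b⁻¹ ∈ U) := by
    intro B U
    by_cases h : ∃ W, P W ∧ ∀ b ∈ B, ∀ w ∈ W, b * w * b⁻¹ ∈ U
    · obtain ⟨W, hW, hWp⟩ := h
      exact ⟨W, hW, fun _ => hWp⟩
    · exact ⟨univ, Puniv, fun hc => absurd hc h⟩
  choose conjW conjW_P conjW_spec using ex_conj
  -- separation witnesses
  have ex_sep : ∀ B : Set G, ∃ W, P W ∧
      ((∃ W', P W' ∧ ∀ b ∈ B, b ∉ W') → ∀ b ∈ B, b ∉ W) := by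
    intro B
    by_cases h : ∃ W', P W' ∧ ∀ b ∈ B, b ∉ W'
    · obtain ⟨W, hW, hWp⟩ := h
      exact ⟨W, hW, fun _ => hWp⟩
    · exact ⟨univ, Puniv, fun hc => absurd hc h⟩
  choose sepW sepW_P sepW_spec using ex_sep
  -- the inductive construction
  set step : Set (Set G) → Set (Set G) := fun S =>
    ((S ∪ (symW '' S)) ∪ Set.image2 conjW Bσ S) ∪ Set.image2 (· ∩ ·) S S with hstep
  set 𝒰 : ℕ → Set (Set G) := fun n => step^[n] (insert univ (sepW '' Bσ)) with h𝒰
  have hsucc : ∀ n, 𝒰 (n + 1) = step (𝒰 n) := fun n => Function.iterate_succ_apply' _ _ _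
  have hmono : ∀ n, 𝒰 n ⊆ 𝒰 (n + 1) := by
    intro n
    rw [hsucc]
    exact fun x hx => Or.inl (Or.inl (Or.inl hx))
  have hmono' : Monotone 𝒰 := monotone_nat_of_le_succ hmono
  have hcnt : ∀ n, (𝒰 n).Countable := by
    intro n
    induction n with
    | zero => exact ((hBc.image sepW).insert univ)
    | succ n ih =>
      rw [hsucc]
      exact (((ih.union (ih.image symW)).union (hBc.image2 ih _)).union (ih.image2 ih _))
  have hPall : ∀ n, ∀ U ∈ 𝒰 n, P U := by
    intro n
    induction n with
    | zero =>
      rintro U (rfl | ⟨B, -, rfl⟩)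
      · exact Puniv
      · exact sepW_P B
    | succ n ih =>
      rw [hsucc]
      rintro U (((hU | ⟨V, hV, rfl⟩) | hU) | hU)
      · exact ih U hU
      · exact symW_P V
      · obtain ⟨B, hB, V, hV, rfl⟩ := hU
        exact conjW_P B V
      · obtain ⟨V, hV, W, hW, rfl⟩ := hU
        exact ⟨(ih V hV).1.inter (ih W hW).1, (ih V hV).2, (ih W hW).2⟩
  refine ⟨⋃ n, 𝒰 n, countable_iUnion hcnt, ⟨univ, mem_iUnion.2 ⟨0, mem_insert _ _⟩⟩,
    ?_, ?_, ?_, ?_, ?_⟩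
  · rintro U hU
    obtain ⟨n, hn⟩ := mem_iUnion.mp hU
    exact hPall n U hn
  · rintro U hU V hV
    obtain ⟨m, hm⟩ := mem_iUnion.mp hU
    obtain ⟨n, hn⟩ := mem_iUnion.mp hV
    refine ⟨U ∩ V, mem_iUnion.2 ⟨max m n + 1, ?_⟩, Subset.rfl⟩
    rw [hsucc]
    exact Or.inr (mem_image2_of_mem (hmono' (le_max_left m n) hm)
      (hmono' (le_max_right m n) hn))
  · rintro U hU
    obtain ⟨n, hn⟩ := mem_iUnion.mp hU
    refine ⟨symW U, mem_iUnion.2 ⟨n + 1, ?_⟩, symW_spec U (hPall n U hn)⟩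
    rw [hsucc]
    exact Or.inl (Or.inl (Or.inr (mem_image_of_mem _ hn)))
  · rintro x₀ U hU
    obtain ⟨n, hn⟩ := mem_iUnion.mp hU
    obtain ⟨hUo, hU1⟩ := hPall n U hn
    have hcont : Continuous fun p : G × G => p.1 * p.2 * p.1⁻¹ := (continuous_fst.mul continuous_snd).mul continuous_fst.inv
    have hpre : IsOpen ((fun p : G × G => p.1 * p.2 * p.1⁻¹) ⁻¹' U) := hUo.preimage hcont
    have hmem : (x₀, (1 : G)) ∈ (fun p : G × G => p.1 * p.2 * p.1⁻¹) ⁻¹' U := by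
      simp [hU1]
    obtain ⟨O, V, hOo, hVo, hx₀O, h1V, hOV⟩ := isOpen_prod_iff.mp hpre x₀ 1 hmem
    obtain ⟨B, hB, hx₀B, hBO⟩ := hBb O hOo x₀ hx₀O
    have hcond : ∃ W, P W ∧ ∀ b ∈ B, ∀ w ∈ W, b * w * b⁻¹ ∈ U :=
      ⟨V, ⟨hVo, h1V⟩, fun b hb w hw => hOV (mk_mem_prod (hBO hb) hw)⟩
    refine ⟨conjW B U, mem_iUnion.2 ⟨n + 1, ?_⟩, fun v hv =>
      conjW_spec B U hcond x₀ hx₀B v hv⟩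
    rw [hsucc]
    exact Or.inl (Or.inr (mem_image2_of_mem hB hn))
  · intro g hg
    obtain ⟨O, W, hOo, hWo, hgO, h1W, hd⟩ := t2_separation hg
    obtain ⟨B, hB, hgB, hBO⟩ := hBb O hOo g hgO
    have hcond : ∃ W', P W' ∧ ∀ b ∈ B, b ∉ W' :=
      ⟨W, ⟨hWo, h1W⟩, fun b hb hbW => disjoint_left.mp hd (hBO hb) hbW⟩
    exact ⟨sepW B, mem_iUnion.2 ⟨0, mem_insert_iff.mpr (Or.inr (mem_image_of_mem _ hB))⟩,
      sepW_spec B hcond g hgB⟩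

end Aux


theorem stmt14_aux2 {G : Type*} [Group G] (gfb : GroupFilterBasis G)
    (hcnt : gfb.sets.Countable)
    (hsep : ∀ g : G, g ≠ 1 → ∃ U ∈ gfb.sets, g ∉ U)
    (D : Set G) (hDc : D.Countable)
    (hDd : ∀ O : Set G, IsOpen[gfb.topology] O → O.Nonempty → (O ∩ D).Nonempty) :
    @T2Space G gfb.topology ∧ @SecondCountableTopology G gfb.topology := by
  letI := gfb.topology
  haveI : IsTopologicalGroup G := gfb.isTopologicalGroup
  haveI ht2 : T2Space G := by
    refine IsTopologicalGroup.t2Space_of_one_sep ?_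
    intro x hx
    obtain ⟨U, hU, hxU⟩ := hsep x hx
    exact ⟨U, gfb.mem_nhds_one hU, hxU⟩
  haveI : FirstCountableTopology G := by
    constructor
    intro x
    haveI : Countable gfb.sets := hcnt.to_subtype
    have hb : (𝓝 x).HasBasis (fun _ : gfb.sets => True)
        (fun V => (fun y => x * y) '' (V : Set G)) := by
      refine ⟨fun t => ?_⟩
      rw [(gfb.nhds_hasBasis x).mem_iff]
      exact ⟨fun ⟨V, hV, hs⟩ => ⟨⟨V, hV⟩, trivial, hs⟩,
        fun ⟨⟨V, hV⟩, _, hs⟩ => ⟨V, hV, hs⟩⟩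
    exact hb.isCountablyGenerated
  haveI hsepa : TopologicalSpace.SeparableSpace G :=
    ⟨⟨D, hDc, dense_iff_inter_open.mpr fun O hO hne => hDd O hO hne⟩⟩
  letI u : UniformSpace G := IsTopologicalGroup.rightUniformSpace G
  haveI : (uniformity G).IsCountablyGenerated := by
    rw [uniformity_eq_comap_nhds_one']
    exact Filter.comap.isCountablyGenerated _ _
  exact ⟨ht2, @UniformSpace.secondCountable_of_separable G u ‹_› hsepa⟩

/-- Let `G` be a second countable Hausdorff topological group (with topology
`σ`). If `G` admits no strictly coarser second countable Hausdorff group topology, then `G` is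
minimal, i.e. `G` admits no strictly coarser Hausdorff group topology at all. -/
theorem stmt14 {G : Type*} [Group G] (σ : TopologicalSpace G)
    (hσgrp : @IsTopologicalGroup G σ _) (hσt2 : @T2Space G σ)
    (hσsc : @SecondCountableTopology G σ)
    (h : ∀ ω : TopologicalSpace G, @IsTopologicalGroup G ω _ → @T2Space G ω →
      @SecondCountableTopology G ω → σ ≤ ω → ω = σ) :
    ∀ ω : TopologicalSpace G, @IsTopologicalGroup G ω _ → @T2Space G ω → σ ≤ ω → ω = σ := by
  intro ω hωgrp hωt2 hωle
  -- countable basis of σ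
  obtain ⟨Bσ, hBc, -, hBb⟩ := @TopologicalSpace.exists_countable_basis G σ hσsc
  have hBref : ∀ O : Set G, IsOpen[ω] O → ∀ x ∈ O, ∃ B ∈ Bσ, x ∈ B ∧ B ⊆ O := by
    intro O hO x hx
    exact @TopologicalSpace.IsTopologicalBasis.exists_subset_of_mem_open G σ Bσ hBb x O hx (hωle _ hO)
  obtain ⟨𝒰, hcnt, hne, hP, hinter, hmulinv, hconj, hsep⟩ :=
    @stmt14_aux G _ ω hωgrp hωt2 Bσ hBc hBref
  -- the group filter basis
  let gfb : GroupFilterBasis G :=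
    { sets := 𝒰
      nonempty := hne
      inter_sets := fun hx hy => hinter _ hx _ hy
      one' := fun hU => (hP _ hU).2
      mul' := fun hU => ((hmulinv _ hU).imp fun V hV => ⟨hV.1, hV.2.1⟩)
      inv' := fun hU => ((hmulinv _ hU).imp fun V hV => ⟨hV.1, hV.2.2⟩)
      conj' := fun x₀ _ hU => hconj x₀ _ hU }
  have hsets : gfb.sets = 𝒰 := rfl
  -- any group topology in which all members of 𝒰 are open is finer than gfb.topology
  have hnhds : ∀ t : TopologicalSpace G, @IsTopologicalGroup G t _ →
      (∀ U ∈ 𝒰, IsOpen[t] U) → t ≤ gfb.topology := by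
    intro t hgrp hopen
    letI := t
    haveI := hgrp
    apply le_of_nhds_le_nhds
    intro x S hS
    rw [(gfb.nhds_hasBasis x).mem_iff] at hS
    obtain ⟨V, hV𝒰, hVS⟩ := hS
    exact mem_nhds_iff.mpr ⟨_, hVS, isOpenMap_mul_left x V (hopen V hV𝒰),
      ⟨1, (hP V hV𝒰).2, mul_one x⟩⟩
  have hστ : σ ≤ gfb.topology := hnhds σ hσgrp fun U hU => hωle _ (hP U hU).1
  have hωτ : ω ≤ gfb.topology := hnhds ω hωgrp fun U hU => (hP U hU).1
  -- a countable σ-dense set is dense for gfb.topology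
  obtain ⟨D, hDc, hDd⟩ := @TopologicalSpace.exists_countable_dense G σ
    (@TopologicalSpace.SecondCountableTopology.to_separableSpace G σ hσsc)
  have hDd' : ∀ O : Set G, IsOpen[gfb.topology] O → O.Nonempty → (O ∩ D).Nonempty := by
    intro O hO hne'
    exact (@dense_iff_inter_open G σ D).mp hDd O (hστ _ hO) hne'
  obtain ⟨ht2, hsc⟩ := stmt14_aux2 gfb hcnt hsep D hDc hDd'
  have hτσ : gfb.topology = σ := h gfb.topology gfb.isTopologicalGroup ht2 hsc hστ
  rw [hτσ] at hωτ
  exact le_antisymm hωτ hωle
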